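/- Let A, B, E, F > 0 with AE > BF. Then: (i) the function H(k) = F k^{5/3} + A k − E k^{2/3} − B has exactly one root k* in (0, ∞), and k* < E/F; (ii) the radial system Δ(u^{2/3}) = −A v + B u, Δ(v^{2/3}) = −E u + F v on ℝ³ admits a nontrivial solution pair (u, v) of radially symmetric, nonincreasing, nonnegative functions, one of which is a constant positive multiple of the other, and both have compact support (the system reduces to a Lane–Emden equation of index 3/2 with negative right-hand-side coefficient). -/

import Mathlib

open Set Filter
open scoped NNReal

noncomputable section

namespace LE54

/-- truncated nonlinearity -/
def g (x : ℝ) : ℝ := (min (max x 0) 1) ^ ((3:ℝ)/2)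

lemma clamp_mem (x : ℝ) : min (max x 0) 1 ∈ Icc (0:ℝ) 1 :=
  ⟨le_min (le_max_right _ _) zero_le_one, min_le_right _ _⟩

lemma g_nonneg (x : ℝ) : 0 ≤ g x := Real.rpow_nonneg (clamp_mem x).1 _

lemma g_le_one (x : ℝ) : g x ≤ 1 := by
  have := Real.rpow_le_one (clamp_mem x).1 (clamp_mem x).2 (by norm_num : (0:ℝ) ≤ 3/2)
  simpa [g] using this

lemma g_abs_le (x : ℝ) : |g x| ≤ 1 := by
  rw [abs_le]; exact ⟨by linarith [g_nonneg x], g_le_one x⟩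

lemma g_eq {x : ℝ} (h0 : 0 ≤ x) (h1 : x ≤ 1) : g x = x ^ ((3:ℝ)/2) := by
  unfold g
  rw [max_eq_left h0, min_eq_left h1]

lemma g_one : g 1 = 1 := by rw [g_eq zero_le_one le_rfl, Real.one_rpow]

lemma g_of_nonpos {x : ℝ} (h : x ≤ 0) : g x = 0 := by
  unfold g
  rw [max_eq_right h, min_eq_left zero_le_one, Real.zero_rpow (by norm_num)]

lemma g_cont : Continuous g := by
  have h1 : Continuous fun x : ℝ => min (max x 0) 1 := by fun_prop
  apply h1.rpow_const
  intro x
  right; norm_num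

lemma sqrt_pow3 {a : ℝ} (ha : 0 ≤ a) :
    (a ^ ((1:ℝ)/2)) ^ 3 = a ^ ((3:ℝ)/2) ∧ (a ^ ((1:ℝ)/2)) ^ 2 = a := by
  constructor
  · rw [← Real.rpow_natCast (a ^ ((1:ℝ)/2)) 3, ← Real.rpow_mul ha]
    norm_num
  · rw [← Real.rpow_natCast (a ^ ((1:ℝ)/2)) 2, ← Real.rpow_mul ha]
    norm_num

lemma cube_lip (p q : ℝ) (hp0 : 0 ≤ p) (hp1 : p ≤ 1) (hq0 : 0 ≤ q) (hq1 : q ≤ 1) :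
    |p^3 - q^3| ≤ (3/2) * |p^2 - q^2| := by
  rcases le_total q p with h | h
  · have e3 : q^3 ≤ p^3 := pow_le_pow_left₀ hq0 h 3
    have e2 : q^2 ≤ p^2 := pow_le_pow_left₀ hq0 h 2
    rw [abs_of_nonneg (by linarith), abs_of_nonneg (by linarith)]
    nlinarith [mul_nonneg (sub_nonneg.2 h) (mul_nonneg (sub_nonneg.2 hp1) hp0),
      mul_nonneg (sub_nonneg.2 h) (mul_nonneg (sub_nonneg.2 hq1) hq0),
      mul_nonneg (sub_nonneg.2 h) (mul_nonneg (sub_nonneg.2 hq1) hp0),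
      mul_nonneg (sub_nonneg.2 h) (mul_nonneg (sub_nonneg.2 hp1) hq0)]
  · have e3 : p^3 ≤ q^3 := pow_le_pow_left₀ hp0 h 3
    have e2 : p^2 ≤ q^2 := pow_le_pow_left₀ hp0 h 2
    rw [abs_of_nonpos (by linarith), abs_of_nonpos (by linarith)]
    nlinarith [mul_nonneg (sub_nonneg.2 h) (mul_nonneg (sub_nonneg.2 hp1) hp0),
      mul_nonneg (sub_nonneg.2 h) (mul_nonneg (sub_nonneg.2 hq1) hq0),
      mul_nonneg (sub_nonneg.2 h) (mul_nonneg (sub_nonneg.2 hq1) hp0),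
      mul_nonneg (sub_nonneg.2 h) (mul_nonneg (sub_nonneg.2 hp1) hq0)]

/-- `x^{3/2}` is `3/2`-Lipschitz on `[0,1]`. -/
lemma rpow32_lip : ∀ x ∈ Icc (0:ℝ) 1, ∀ y ∈ Icc (0:ℝ) 1,
    |x ^ ((3:ℝ)/2) - y ^ ((3:ℝ)/2)| ≤ (3/2) * |x - y| := by
  intro a ha b hb
  have hp0 : 0 ≤ a ^ ((1:ℝ)/2) := Real.rpow_nonneg ha.1 _
  have hq0 : 0 ≤ b ^ ((1:ℝ)/2) := Real.rpow_nonneg hb.1 _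
  have hp1 : a ^ ((1:ℝ)/2) ≤ 1 := Real.rpow_le_one ha.1 ha.2 (by norm_num)
  have hq1 : b ^ ((1:ℝ)/2) ≤ 1 := Real.rpow_le_one hb.1 hb.2 (by norm_num)
  obtain ⟨hp3, hp2⟩ := sqrt_pow3 ha.1
  obtain ⟨hq3, hq2⟩ := sqrt_pow3 hb.1
  have key := cube_lip _ _ hp0 hp1 hq0 hq1
  rw [hp3, hq3, hp2, hq2] at key
  exact key

lemma abs_min_const (x y c : ℝ) : |min x c - min y c| ≤ |x - y| := by
  rcases le_total x c with h1 | h1 <;> rcases le_total y c with h2 | h2 <;>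
    simp only [min_eq_left, min_eq_right, h1, h2, abs_sub_le_iff] <;>
    constructor <;>
    cases abs_cases (x - y) <;> linarith [le_abs_self (x - y), neg_abs_le (x - y)]

lemma g_lip (x y : ℝ) : |g x - g y| ≤ (3/2) * |x - y| := by
  have hcl : |min (max x 0) 1 - min (max y 0) 1| ≤ |x - y| := by
    calc |min (max x 0) 1 - min (max y 0) 1| ≤ |max x 0 - max y 0| := abs_min_const _ _ _
    _ ≤ |x - y| := abs_max_sub_max_le_abs _ _ _
  have := rpow32_lip _ (clamp_mem x) _ (clamp_mem y)
  unfold g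
  nlinarith [abs_nonneg (x - y)]

/-- `x² ≤ x^{3/2}` on `[0,1]`. -/
lemma sq_le_g {x : ℝ} (h0 : 0 ≤ x) (h1 : x ≤ 1) : x ^ 2 ≤ g x := by
  rw [g_eq h0 h1]
  have : x ^ (2:ℝ) ≤ x ^ ((3:ℝ)/2) :=
    Real.rpow_le_rpow_of_exponent_ge' h0 h1 (by norm_num) (by norm_num)
  calc x ^ 2 = x ^ (2:ℝ) := by rw [← Real.rpow_natCast x 2]; norm_num
  _ ≤ _ := this

/- ### Polynomial root facts (cube-root substitution) -/

lemma cube_rpow (x : ℝ) (hx : 0 ≤ x) (n : ℕ) : (x^3 : ℝ) ^ ((n:ℝ)/3) = x ^ n := by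
  rw [← Real.rpow_natCast x 3, ← Real.rpow_mul hx]
  have h : ((3:ℕ):ℝ) * ((n:ℝ)/3) = (n:ℝ) := by push_cast; ring
  rw [h, Real.rpow_natCast]

lemma poly_uniq {P Q R S x y : ℝ} (hP : 0 < P) (hQ : 0 < Q) (hS : 0 < S)
    (hx : 0 < x) (hy : 0 < y)
    (h1 : P*x^5 + Q*x^3 - R*x^2 - S = 0) (h2 : P*y^5 + Q*y^3 - R*y^2 - S = 0) :
    x = y := by
  have main : ∀ u v : ℝ, 0 < u → 0 < v → u < v →
      P*u^5 + Q*u^3 - R*u^2 - S = 0 → P*v^5 + Q*v^3 - R*v^2 - S = 0 → False := by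
    intro u v hu hv huv e1 e2
    have key : P*((u^2*v^2)*(v^3-u^3)) + Q*((u^2*v^2)*(v-u)) + S*(v^2-u^2) = 0 := by
      linear_combination u^2*e2 - v^2*e1
    have h3 : u^3 < v^3 := pow_lt_pow_left₀ huv hu.le (by norm_num)
    have t1 : 0 < P*((u^2*v^2)*(v^3-u^3)) := by
      apply mul_pos hP; apply mul_pos (by positivity); linarith
    have t2 : 0 < Q*((u^2*v^2)*(v-u)) := by
      apply mul_pos hQ; apply mul_pos (by positivity); linarith
    have t3 : 0 < S*(v^2-u^2) := by
      apply mul_pos hS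
      have := pow_lt_pow_left₀ huv hu.le (n := 2) (by norm_num)
      linarith
    linarith
  rcases lt_trichotomy x y with h | h | h
  · exact absurd (main x y hx hy h h1 h2) (by simp)
  · exact h
  · exact absurd (main y x hy hx h h2 h1) (by simp)

lemma poly_exists {P Q R S : ℝ} (hP : 0 < P) (hQ : 0 < Q) (hR : 0 < R) (hS : 0 < S) :
    ∃ s : ℝ, 0 < s ∧ P*s^5 + Q*s^3 - R*s^2 - S = 0 := by
  set s0 : ℝ := min 1 (S/(P+Q+R)) / 2 with hs0
  set s1 : ℝ := max 1 ((R+S+1)/P) with hs1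
  have hPQR : 0 < P + Q + R := by linarith
  have hs0pos : 0 < s0 := by
    apply half_pos; apply lt_min one_pos; positivity
  have hs0le1 : s0 ≤ 1 := by
    have : min 1 (S/(P+Q+R)) ≤ 1 := min_le_left _ _
    simp only [hs0]; linarith
  have hs0lt : s0 * (P+Q+R) < S := by
    have h1 : min 1 (S/(P+Q+R)) ≤ S/(P+Q+R) := min_le_right _ _
    have h2 : 0 < S/(P+Q+R) := by positivity
    have h3 : s0 < S/(P+Q+R) := by simp only [hs0]; linarith
    rw [← lt_div_iff₀ hPQR]; exact h3
  have hval0 : P*s0^5 + Q*s0^3 - R*s0^2 - S < 0 := by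
    have h5 : s0^5 ≤ s0 := by
      calc s0^5 ≤ s0^1 := pow_le_pow_of_le_one hs0pos.le hs0le1 (by norm_num)
      _ = s0 := pow_one s0
    have h3 : s0^3 ≤ s0 := by
      calc s0^3 ≤ s0^1 := pow_le_pow_of_le_one hs0pos.le hs0le1 (by norm_num)
      _ = s0 := pow_one s0
    have hb1 : P*s0^5 ≤ P*s0 := mul_le_mul_of_nonneg_left h5 hP.le
    have hb2 : Q*s0^3 ≤ Q*s0 := mul_le_mul_of_nonneg_left h3 hQ.le
    have hb3 : 0 < R*s0^2 := by positivity
    nlinarith [mul_pos hR hs0pos]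
  have hs1ge1 : (1:ℝ) ≤ s1 := le_max_left _ _
  have hs1P : R + S + 1 ≤ P * s1 := by
    have hs1ge : (R+S+1)/P ≤ s1 := le_max_right _ _
    rw [div_le_iff₀ hP] at hs1ge; linarith
  have hval1 : 0 < P*s1^5 + Q*s1^3 - R*s1^2 - S := by
    have h4 : s1^2 ≤ s1^4 := pow_le_pow_right₀ hs1ge1 (by norm_num)
    have h44 : (1:ℝ) ≤ s1^4 := one_le_pow₀ hs1ge1
    have key : (R+S+1) * s1^4 ≤ P*s1 * s1^4 :=
      mul_le_mul_of_nonneg_right hs1P (by positivity)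
    have hq : 0 < Q*s1^3 := by positivity
    nlinarith [mul_le_mul_of_nonneg_left h4 hR.le, mul_le_mul_of_nonneg_left h44 hS.le]
  have hcont : ContinuousOn (fun s : ℝ => P*s^5 + Q*s^3 - R*s^2 - S) (Icc s0 s1) := by
    fun_prop
  have hle : s0 ≤ s1 := le_trans hs0le1 hs1ge1
  have := intermediate_value_Icc hle hcont
  obtain ⟨s, hs, hval⟩ := this ⟨le_of_lt hval0, le_of_lt hval1⟩
  exact ⟨s, lt_of_lt_of_le hs0pos hs.1, hval⟩

/- ### The integral operator and its fixed point -/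

def T0 : ℝ := Real.exp 2000

lemma T0_big : 2001 ≤ T0 := by
  have := Real.add_one_le_exp (2000:ℝ)
  unfold T0; linarith

lemma T0_pos : 0 < T0 := by linarith [T0_big]

def lam : ℝ := 12 * T0

lemma lam_pos : 0 < lam := by unfold lam; linarith [T0_pos]

/-- clamp to `[0, T0]` -/
def pc (r : ℝ) : ℝ := min (max r 0) T0

lemma pc_mem (r : ℝ) : pc r ∈ Icc (0:ℝ) T0 :=
  ⟨le_min (le_max_right _ _) T0_pos.le, min_le_right _ _⟩

lemma pc_of_mem {r : ℝ} (hr : r ∈ Icc (0:ℝ) T0) : pc r = r := by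
  unfold pc
  rw [max_eq_left hr.1, min_eq_left hr.2]

lemma pc_of_ge {r : ℝ} (hr : T0 ≤ r) : pc r = T0 := by
  unfold pc
  rw [min_eq_right]
  exact le_max_of_le_left hr

lemma pc_cont : Continuous pc := by unfold pc; fun_prop

abbrev Xsp := C(Icc (0:ℝ) T0, ℝ)

/-- extension of an element of the function space to all of `ℝ` -/
def ext (φ : Xsp) : ℝ → ℝ := fun t => φ ⟨pc t, pc_mem t⟩

lemma ext_cont (φ : Xsp) : Continuous (ext φ) :=
  φ.continuous.comp (pc_cont.subtype_mk _)

lemma ext_dist (φ ψ : Xsp) (t : ℝ) : |ext φ t - ext ψ t| ≤ dist φ ψ := by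
  have := ContinuousMap.dist_apply_le_dist (f := φ) (g := ψ) ⟨pc t, pc_mem t⟩
  simpa [ext, Real.dist_eq] using this

/-- the integrand associated with `φ` -/
def Gf (φ : Xsp) : ℝ → ℝ := fun t => g (Real.exp (lam * t) * ext φ t)

lemma Gf_cont (φ : Xsp) : Continuous (Gf φ) := by
  apply g_cont.comp
  exact (Real.continuous_exp.comp (continuous_const.mul continuous_id)).mul (ext_cont φ)

lemma Gf_abs_le (φ : Xsp) (t : ℝ) : |Gf φ t| ≤ 1 := g_abs_le _

/-- the basic radial integral operator -/
def Pop (h : ℝ → ℝ) : ℝ → ℝ := fun r =>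
  1 - (∫ t in (0:ℝ)..r, t * h t) + r⁻¹ * ∫ t in (0:ℝ)..r, t^2 * h t

lemma Pop_zero (h : ℝ → ℝ) : Pop h 0 = 1 := by
  simp [Pop]

lemma Pop_sub_one_bound {h : ℝ → ℝ} (hb : ∀ t, |h t| ≤ 1) {r : ℝ} (hr : 0 ≤ r) :
    |Pop h r - 1| ≤ 2 * r^2 := by
  have h1 : |∫ t in (0:ℝ)..r, t * h t| ≤ r * |r - 0| := by
    rw [← Real.norm_eq_abs]
    apply intervalIntegral.norm_integral_le_of_norm_le_const
    intro x hx
    rw [uIoc_of_le hr] at hx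
    rw [Real.norm_eq_abs, abs_mul]
    have : |x| ≤ r := by rw [abs_of_nonneg hx.1.le]; exact hx.2
    nlinarith [abs_nonneg x, abs_nonneg (h x), hb x]
  have h2 : |∫ t in (0:ℝ)..r, t^2 * h t| ≤ r^2 * |r - 0| := by
    rw [← Real.norm_eq_abs]
    apply intervalIntegral.norm_integral_le_of_norm_le_const
    intro x hx
    rw [uIoc_of_le hr] at hx
    rw [Real.norm_eq_abs, abs_mul]
    have hx2 : x^2 ≤ r^2 := by nlinarith [hx.1, hx.2]
    have : |x^2| = x^2 := abs_of_nonneg (sq_nonneg x)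
    nlinarith [abs_nonneg (h x), hb x, sq_nonneg x]
  rcases eq_or_lt_of_le hr with h0 | h0
  · rw [← h0]; norm_num [Pop]
  · have h3 : |r⁻¹ * ∫ t in (0:ℝ)..r, t^2 * h t| ≤ r^2 := by
      rw [abs_mul, abs_of_nonneg (inv_nonneg.2 hr)]
      have hstep := mul_le_mul_of_nonneg_left h2 (inv_nonneg.2 hr)
      have heq : r⁻¹ * (r^2 * |r - 0|) = r^2 := by
        rw [sub_zero, abs_of_nonneg hr]
        field_simp [ne_of_gt h0]
      calc r⁻¹ * |∫ t in (0:ℝ)..r, t^2 * h t| ≤ r⁻¹ * (r^2 * |r - 0|) := hstep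
      _ = r^2 := heq
    have : Pop h r - 1 = -(∫ t in (0:ℝ)..r, t * h t) + r⁻¹ * ∫ t in (0:ℝ)..r, t^2 * h t := by
      unfold Pop; ring
    rw [this]
    have habs := abs_add_le (-(∫ t in (0:ℝ)..r, t * h t)) (r⁻¹ * ∫ t in (0:ℝ)..r, t^2 * h t)
    rw [abs_neg] at habs
    have : r * |r - 0| = r^2 := by rw [abs_of_nonneg (by linarith)]; ring
    nlinarith [h1, h3, habs]

lemma Pop_continuousOn {h : ℝ → ℝ} (hc : Continuous h) (hb : ∀ t, |h t| ≤ 1) :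
    ContinuousOn (Pop h) (Ici 0) := by
  have hint1 : ∀ a b : ℝ, IntervalIntegrable (fun t => t * h t) MeasureTheory.volume a b :=
    fun a b => (continuous_id.mul hc).intervalIntegrable a b
  have hint2 : ∀ a b : ℝ, IntervalIntegrable (fun t => t^2 * h t) MeasureTheory.volume a b :=
    fun a b => ((continuous_pow 2).mul hc).intervalIntegrable a b
  have hc1 : Continuous fun r : ℝ => ∫ t in (0:ℝ)..r, t * h t :=
    intervalIntegral.continuous_primitive hint1 0
  have hc2 : Continuous fun r : ℝ => ∫ t in (0:ℝ)..r, t^2 * h t :=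
    intervalIntegral.continuous_primitive hint2 0
  intro x hx
  rcases eq_or_lt_of_le (mem_Ici.mp hx) with h0 | h0
  · -- continuity at 0 via the quantitative bound
    rw [ContinuousWithinAt, ← h0, Pop_zero]
    have hsq : Tendsto (fun r : ℝ => 2 * r^2) (nhdsWithin 0 (Ici 0)) (nhds 0) := by
      have hcsq : Continuous fun r : ℝ => 2 * r^2 := by fun_prop
      have : Tendsto (fun r : ℝ => 2 * r^2) (nhds 0) (nhds (2 * (0:ℝ)^2)) := hcsq.tendsto 0
      rw [show (2 * (0:ℝ)^2) = 0 by norm_num] at this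
      exact this.mono_left nhdsWithin_le_nhds
    have hbound : ∀ r ∈ Ici (0:ℝ), ‖Pop h r - 1‖ ≤ 2 * r^2 := by
      intro r hr
      rw [Real.norm_eq_abs]
      exact Pop_sub_one_bound hb hr
    have : Tendsto (fun r => Pop h r - 1) (nhdsWithin 0 (Ici 0)) (nhds 0) := by
      apply squeeze_zero_norm' _ hsq
      exact eventually_nhdsWithin_of_forall hbound
    have := this.add_const 1
    simpa using this
  · -- continuity at x > 0
    apply ContinuousAt.continuousWithinAt
    apply ContinuousAt.add
    · exact (continuous_const.sub hc1).continuousAt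
    · exact ContinuousAt.mul ((continuousAt_inv₀ (ne_of_gt h0))) hc2.continuousAt

/-- the contraction operator -/
def Sop (φ : Xsp) : Xsp :=
  ⟨fun x => Real.exp (-(lam * (x:ℝ))) * Pop (Gf φ) (x:ℝ), by
    apply Continuous.mul
    · fun_prop
    · exact ContinuousOn.restrict
        ((Pop_continuousOn (Gf_cont φ) (Gf_abs_le φ)).mono (fun y hy => hy.1))⟩

lemma int_exp_bound (r : ℝ) (hr : 0 ≤ r) :
    ∫ t in (0:ℝ)..r, Real.exp (lam * t) ≤ Real.exp (lam * r) / lam := by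
  have hderiv : ∀ t ∈ uIcc (0:ℝ) r, HasDerivAt (fun t => Real.exp (lam * t) / lam)
      (Real.exp (lam * t)) t := by
    intro t _
    have h1 : HasDerivAt (fun t : ℝ => lam * t) lam t := by
      simpa using (hasDerivAt_id t).const_mul lam
    have h2 := (Real.hasDerivAt_exp (lam * t)).comp t h1
    have h3 := h2.div_const lam
    have : Real.exp (lam * t) * lam / lam = Real.exp (lam * t) := by
      rw [mul_div_assoc, div_self (ne_of_gt lam_pos), mul_one]
    rw [this] at h3
    exact h3
  have := intervalIntegral.integral_eq_sub_of_hasDerivAt hderiv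
    ((Real.continuous_exp.comp (continuous_const.mul continuous_id)).intervalIntegrable 0 r)
  rw [this]
  have : Real.exp (lam * 0) / lam = 1 / lam := by norm_num
  rw [this]
  have hl := lam_pos
  have : 0 < 1 / lam := by positivity
  linarith

lemma Sop_contract (φ ψ : Xsp) : dist (Sop φ) (Sop ψ) ≤ (1/2) * dist φ ψ := by
  have hd : 0 ≤ dist φ ψ := dist_nonneg
  rw [ContinuousMap.dist_le (by positivity)]
  intro x
  obtain ⟨hx0, hxT⟩ := x.2
  set r : ℝ := (x : ℝ) with hr
  set D := dist φ ψ with hD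
  -- pointwise difference of the two integrands
  have hGdiff : ∀ t ∈ Icc (0:ℝ) r, |Gf φ t - Gf ψ t| ≤ (3/2) * Real.exp (lam * t) * D := by
    intro t ht
    have h1 := g_lip (Real.exp (lam * t) * ext φ t) (Real.exp (lam * t) * ext ψ t)
    have h2 : |Real.exp (lam * t) * ext φ t - Real.exp (lam * t) * ext ψ t|
        = Real.exp (lam * t) * |ext φ t - ext ψ t| := by
      rw [← mul_sub, abs_mul, abs_of_pos (Real.exp_pos _)]
    have h3 := ext_dist φ ψ t
    have hexp : 0 < Real.exp (lam * t) := Real.exp_pos _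
    calc |Gf φ t - Gf ψ t| ≤ (3/2) * |Real.exp (lam * t) * ext φ t - Real.exp (lam * t) * ext ψ t| := h1
    _ = (3/2) * (Real.exp (lam * t) * |ext φ t - ext ψ t|) := by rw [h2]
    _ ≤ (3/2) * (Real.exp (lam * t) * D) := by nlinarith
    _ = (3/2) * Real.exp (lam * t) * D := by ring
  have hcont : Continuous fun t => Gf φ t - Gf ψ t := (Gf_cont φ).sub (Gf_cont ψ)
  have hexpint : ∫ t in (0:ℝ)..r, Real.exp (lam * t) ≤ Real.exp (lam * r) / lam :=
    int_exp_bound r hx0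
  have hexpnn : (0:ℝ) ≤ ∫ t in (0:ℝ)..r, Real.exp (lam * t) := by
    apply intervalIntegral.integral_nonneg hx0
    intro u hu; positivity
  -- bound for the first integral difference
  have key : ∀ (k : ℝ → ℝ), Continuous k → (∀ t ∈ Icc (0:ℝ) r, |k t| ≤ r) →
      |∫ t in (0:ℝ)..r, k t * (Gf φ t - Gf ψ t)| ≤ r * ((3/2) * D) * (Real.exp (lam * r) / lam) := by
    intro k hk hkb
    have h1 : |∫ t in (0:ℝ)..r, k t * (Gf φ t - Gf ψ t)|
        ≤ ∫ t in (0:ℝ)..r, r * ((3/2) * D) * Real.exp (lam * t) := by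
      calc |∫ t in (0:ℝ)..r, k t * (Gf φ t - Gf ψ t)|
          ≤ ∫ t in (0:ℝ)..r, |k t * (Gf φ t - Gf ψ t)| :=
            intervalIntegral.abs_integral_le_integral_abs hx0
      _ ≤ ∫ t in (0:ℝ)..r, r * ((3/2) * D) * Real.exp (lam * t) := by
          apply intervalIntegral.integral_mono_on hx0
          · exact ((hk.mul hcont).abs).intervalIntegrable 0 r
          · exact (Continuous.intervalIntegrable (by fun_prop) 0 r)
          · intro t ht
            rw [abs_mul]
            have hg := hGdiff t ht
            have hkk := hkb t ht
            have h1 := abs_nonneg (k t)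
            have h2 := abs_nonneg (Gf φ t - Gf ψ t)
            have hexp : 0 < Real.exp (lam * t) := Real.exp_pos _
            nlinarith
    have h2 : ∫ t in (0:ℝ)..r, r * ((3/2) * D) * Real.exp (lam * t)
        = r * ((3/2) * D) * ∫ t in (0:ℝ)..r, Real.exp (lam * t) := by
      rw [← intervalIntegral.integral_const_mul]
    rw [h2] at h1
    calc |∫ t in (0:ℝ)..r, k t * (Gf φ t - Gf ψ t)|
        ≤ r * ((3/2) * D) * ∫ t in (0:ℝ)..r, Real.exp (lam * t) := h1
    _ ≤ r * ((3/2) * D) * (Real.exp (lam * r) / lam) := by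
        apply mul_le_mul_of_nonneg_left hexpint; positivity
  -- integrability of the four basic integrands
  have intp1 : IntervalIntegrable (fun t => t * Gf φ t) MeasureTheory.volume 0 r :=
    (continuous_id.mul (Gf_cont φ)).intervalIntegrable 0 r
  have intq1 : IntervalIntegrable (fun t => t * Gf ψ t) MeasureTheory.volume 0 r :=
    (continuous_id.mul (Gf_cont ψ)).intervalIntegrable 0 r
  have intp2 : IntervalIntegrable (fun t => t^2 * Gf φ t) MeasureTheory.volume 0 r :=
    ((continuous_pow 2).mul (Gf_cont φ)).intervalIntegrable 0 r
  have intq2 : IntervalIntegrable (fun t => t^2 * Gf ψ t) MeasureTheory.volume 0 r :=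
    ((continuous_pow 2).mul (Gf_cont ψ)).intervalIntegrable 0 r
  have i1 : ∫ t in (0:ℝ)..r, id t * (Gf φ t - Gf ψ t)
      = (∫ t in (0:ℝ)..r, t * Gf φ t) - ∫ t in (0:ℝ)..r, t * Gf ψ t := by
    rw [← intervalIntegral.integral_sub intp1 intq1]
    apply intervalIntegral.integral_congr
    intro t _
    simp [mul_sub]
  have i2 : ∫ t in (0:ℝ)..r, (fun t => t^2 * r⁻¹) t * (Gf φ t - Gf ψ t)
      = r⁻¹ * ((∫ t in (0:ℝ)..r, t^2 * Gf φ t) - ∫ t in (0:ℝ)..r, t^2 * Gf ψ t) := by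
    rw [← intervalIntegral.integral_sub intp2 intq2, ← intervalIntegral.integral_const_mul]
    apply intervalIntegral.integral_congr
    intro t _
    simp only
    ring
  have k1 := key id continuous_id (by
    intro t ht
    rw [id]
    rw [abs_of_nonneg ht.1]
    exact ht.2)
  have k2 := key (fun t => t^2 * r⁻¹) (by fun_prop) (by
    intro t ht
    rcases eq_or_lt_of_le hx0 with h0 | h0
    · have ht0 : t = 0 := le_antisymm (by rw [← h0] at ht; exact ht.2) ht.1
      simp [ht0, ← h0]
    · have h2 : t^2 ≤ r^2 := by nlinarith [ht.1, ht.2]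
      rw [abs_of_nonneg (by positivity)]
      calc t^2 * r⁻¹ ≤ r^2 * r⁻¹ := by
            apply mul_le_mul_of_nonneg_right h2 (by positivity)
      _ = r := by field_simp [ne_of_gt h0])
  rw [i1] at k1
  rw [i2] at k2
  -- assemble
  simp only [Sop, ContinuousMap.coe_mk]
  rw [Real.dist_eq]
  have hfactor : Real.exp (-(lam*r)) * Pop (Gf φ) r - Real.exp (-(lam*r)) * Pop (Gf ψ) r
      = Real.exp (-(lam*r)) * (Pop (Gf φ) r - Pop (Gf ψ) r) := by ring
  rw [hfactor, abs_mul, abs_of_pos (Real.exp_pos _)]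
  set M := r * ((3/2) * D) * (Real.exp (lam * r) / lam) with hM
  have habs : |Pop (Gf φ) r - Pop (Gf ψ) r| ≤ 2 * M := by
    have hPdiff : Pop (Gf φ) r - Pop (Gf ψ) r
        = -((∫ t in (0:ℝ)..r, t * Gf φ t) - ∫ t in (0:ℝ)..r, t * Gf ψ t)
          + r⁻¹ * ((∫ t in (0:ℝ)..r, t^2 * Gf φ t) - ∫ t in (0:ℝ)..r, t^2 * Gf ψ t) := by
      unfold Pop; ring
    rw [hPdiff]
    have := abs_add_le (-((∫ t in (0:ℝ)..r, t * Gf φ t) - ∫ t in (0:ℝ)..r, t * Gf ψ t))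
      (r⁻¹ * ((∫ t in (0:ℝ)..r, t^2 * Gf φ t) - ∫ t in (0:ℝ)..r, t^2 * Gf ψ t))
    rw [abs_neg] at this
    linarith
  have hexpone : Real.exp (-(lam*r)) * Real.exp (lam*r) = 1 := by
    rw [← Real.exp_add]; simp
  calc Real.exp (-(lam*r)) * |Pop (Gf φ) r - Pop (Gf ψ) r|
      ≤ Real.exp (-(lam*r)) * (2*M) :=
        mul_le_mul_of_nonneg_left habs (Real.exp_pos _).le
  _ = (Real.exp (-(lam*r)) * Real.exp (lam*r)) * (3*r*D/lam) := by rw [hM]; ring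
  _ = 3*r*D/lam := by rw [hexpone, one_mul]
  _ ≤ (1/2) * D := by
      rw [div_le_iff₀ lam_pos]
      have h1 : 3*r*D ≤ 3*T0*D := by nlinarith
      have h2 : lam = 12*T0 := rfl
      nlinarith [T0_pos]

/-- the fixed point -/
instance : Nonempty Xsp := ⟨ContinuousMap.const _ 0⟩

lemma Sop_contractingWith : ContractingWith (1/2 : ℝ≥0) Sop := by
  constructor
  · rw [← NNReal.coe_lt_coe]
    push_cast
    norm_num
  · apply LipschitzWith.of_dist_le_mul
    intro φ ψ
    have h := Sop_contract φ ψ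
    have hK : ((1/2 : ℝ≥0) : ℝ) = 1/2 := by norm_num
    rw [hK]
    linarith

def wstar : Xsp := ContractingWith.fixedPoint Sop Sop_contractingWith

lemma wstar_fixed : Sop wstar = wstar :=
  ContractingWith.fixedPoint_isFixedPt Sop_contractingWith

/-- the solution profile on all of `ℝ` (constant outside `[0,T0]`) -/
def w : ℝ → ℝ := fun r => Real.exp (lam * pc r) * wstar ⟨pc r, pc_mem r⟩

lemma w_cont : Continuous w := by
  apply Continuous.mul
  · exact Real.continuous_exp.comp (continuous_const.mul pc_cont)
  · exact wstar.continuous.comp (pc_cont.subtype_mk _)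

lemma w_clamp {r : ℝ} (hr : T0 ≤ r) : w r = w T0 := by
  unfold w
  have h1 : pc r = pc T0 := by rw [pc_of_ge hr, pc_of_ge (le_refl T0)]
  rw [show (⟨pc r, pc_mem r⟩ : Icc (0:ℝ) T0) = ⟨pc T0, pc_mem T0⟩ from Subtype.ext h1, h1]

lemma w_ext_eq {t : ℝ} (ht : t ∈ Icc (0:ℝ) T0) :
    w t = Real.exp (lam * t) * ext wstar t := by
  unfold w ext
  congr 2
  rw [pc_of_mem ht]

lemma w_eqn : ∀ r ∈ Icc (0:ℝ) T0, w r = Pop (fun t => g (w t)) r := by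
  intro r hr
  have h1 : w r = Real.exp (lam * r) * wstar ⟨r, hr⟩ := by
    have hsub : (⟨pc r, pc_mem r⟩ : Icc (0:ℝ) T0) = ⟨r, hr⟩ := Subtype.ext (pc_of_mem hr)
    unfold w
    rw [hsub, pc_of_mem hr]
  have h2 : wstar ⟨r, hr⟩ = Real.exp (-(lam * r)) * Pop (Gf wstar) r := by
    conv_lhs => rw [← wstar_fixed]
    rfl
  have h3 : Real.exp (lam * r) * (Real.exp (-(lam * r)) * Pop (Gf wstar) r)
      = Pop (Gf wstar) r := by
    rw [← mul_assoc, ← Real.exp_add]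
    simp
  have h4 : Pop (Gf wstar) r = Pop (fun t => g (w t)) r := by
    unfold Pop
    have hEq : EqOn (fun t => t * Gf wstar t) (fun t => t * g (w t)) (uIcc 0 r) := by
      intro t ht
      rw [uIcc_of_le hr.1] at ht
      have htT : t ∈ Icc (0:ℝ) T0 := ⟨ht.1, le_trans ht.2 hr.2⟩
      show t * Gf wstar t = t * g (w t)
      rw [w_ext_eq htT]
      rfl
    have hEq2 : EqOn (fun t => t^2 * Gf wstar t) (fun t => t^2 * g (w t)) (uIcc 0 r) := by
      intro t ht
      rw [uIcc_of_le hr.1] at ht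
      have htT : t ∈ Icc (0:ℝ) T0 := ⟨ht.1, le_trans ht.2 hr.2⟩
      show t^2 * Gf wstar t = t^2 * g (w t)
      rw [w_ext_eq htT]
      rfl
    rw [intervalIntegral.integral_congr hEq, intervalIntegral.integral_congr hEq2]
  rw [h1, h2, h3, h4]

lemma w_zero : w 0 = 1 := by
  rw [w_eqn 0 ⟨le_refl 0, T0_pos.le⟩, Pop_zero]

/- ### Analysis of the profile `w` -/

lemma gw_cont : Continuous (fun t => g (w t)) := g_cont.comp w_cont

lemma w_kernel : ∀ r ∈ Ioc (0:ℝ) T0, w r = 1 - ∫ t in (0:ℝ)..r, (t - t^2 * r⁻¹) * g (w t) := by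
  intro r hr
  rw [w_eqn r ⟨hr.1.le, hr.2⟩]
  unfold Pop
  have int1 : IntervalIntegrable (fun t => t * g (w t)) MeasureTheory.volume 0 r :=
    (continuous_id.mul gw_cont).intervalIntegrable 0 r
  have int2 : IntervalIntegrable (fun t => r⁻¹ * (t^2 * g (w t))) MeasureTheory.volume 0 r :=
    (continuous_const.mul ((continuous_pow 2).mul gw_cont)).intervalIntegrable 0 r
  have h1 : ∫ t in (0:ℝ)..r, (t - t^2 * r⁻¹) * g (w t)
      = (∫ t in (0:ℝ)..r, t * g (w t)) - ∫ t in (0:ℝ)..r, r⁻¹ * (t^2 * g (w t)) := by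
    rw [← intervalIntegral.integral_sub int1 int2]
    apply intervalIntegral.integral_congr
    intro t _
    simp only
    ring
  rw [h1, intervalIntegral.integral_const_mul]
  ring

lemma kernel_nonneg {r t : ℝ} (hr : 0 < r) (ht : t ∈ Icc (0:ℝ) r) :
    0 ≤ (t - t^2 * r⁻¹) * g (w t) := by
  apply mul_nonneg _ (g_nonneg _)
  have h1 : t^2 ≤ t * r := by nlinarith [ht.1, ht.2]
  have h2 : t^2 * r⁻¹ ≤ (t * r) * r⁻¹ := mul_le_mul_of_nonneg_right h1 (inv_nonneg.2 hr.le)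
  have h3 : (t * r) * r⁻¹ = t := by field_simp
  linarith

lemma kernel_le {r t : ℝ} (hr : 0 < r) (ht : t ∈ Icc (0:ℝ) r) :
    (t - t^2 * r⁻¹) * g (w t) ≤ t := by
  have h0 := kernel_nonneg hr ht
  have hg1 := g_le_one (w t)
  have hg0 := g_nonneg (w t)
  have h1 : 0 ≤ t^2 * r⁻¹ := by positivity
  have h2 : t - t^2 * r⁻¹ ≤ t := by linarith
  nlinarith [ht.1]

lemma w_le_one : ∀ r ∈ Icc (0:ℝ) T0, w r ≤ 1 := by
  intro r hr
  rcases eq_or_lt_of_le hr.1 with h0 | h0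
  · rw [← h0, w_zero]
  · rw [w_kernel r ⟨h0, hr.2⟩]
    have : 0 ≤ ∫ t in (0:ℝ)..r, (t - t^2 * r⁻¹) * g (w t) :=
      intervalIntegral.integral_nonneg h0.le (fun t ht => kernel_nonneg h0 ht)
    linarith

lemma w_lower : ∀ r ∈ Icc (0:ℝ) T0, 1 - r^2/2 ≤ w r := by
  intro r hr
  rcases eq_or_lt_of_le hr.1 with h0 | h0
  · rw [← h0, w_zero]; norm_num
  · rw [w_kernel r ⟨h0, hr.2⟩]
    have h1 : ∫ t in (0:ℝ)..r, (t - t^2 * r⁻¹) * g (w t) ≤ ∫ t in (0:ℝ)..r, t := by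
      apply intervalIntegral.integral_mono_on h0.le
      · exact (Continuous.intervalIntegrable (by
          have : Continuous (fun t : ℝ => (t - t^2 * r⁻¹)) := by fun_prop
          exact this.mul gw_cont) 0 r)
      · exact continuous_id.intervalIntegrable 0 r
      · exact fun t ht => kernel_le h0 ht
    rw [integral_id] at h1
    have : (r^2 - 0^2)/2 = r^2/2 := by norm_num
    rw [this] at h1
    linarith

/-- second moment primitive -/
def Q : ℝ → ℝ := fun r => ∫ t in (0:ℝ)..r, t^2 * g (w t)

lemma Q_cont : Continuous Q :=
  intervalIntegral.continuous_primitive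
    (fun a b => ((continuous_pow 2).mul gw_cont).intervalIntegrable a b) 0

lemma Q_deriv (r : ℝ) : HasDerivAt Q (r^2 * g (w r)) r := by
  exact (Continuous.integral_hasStrictDerivAt ((continuous_pow 2).mul gw_cont) 0 r).hasDerivAt

lemma Q_nonneg {r : ℝ} (hr : 0 ≤ r) : 0 ≤ Q r :=
  intervalIntegral.integral_nonneg hr (fun t _ => mul_nonneg (sq_nonneg t) (g_nonneg _))

lemma Q_add (a b : ℝ) : Q b - Q a = ∫ t in a..b, t^2 * g (w t) := by
  have h := intervalIntegral.integral_add_adjacent_intervals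
    (a := 0) (b := a) (c := b) (μ := MeasureTheory.volume) (f := fun t => t^2 * g (w t))
    (((continuous_pow 2).mul gw_cont).intervalIntegrable 0 a)
    (((continuous_pow 2).mul gw_cont).intervalIntegrable a b)
  unfold Q
  linarith

lemma Q_mono {a b : ℝ} (ha : 0 ≤ a) (hab : a ≤ b) : Q a ≤ Q b := by
  have h := Q_add a b
  have : 0 ≤ ∫ t in a..b, t^2 * g (w t) :=
    intervalIntegral.integral_nonneg hab (fun t _ => mul_nonneg (sq_nonneg t) (g_nonneg _))
  linarith

lemma Q_le {r : ℝ} (hr : 0 ≤ r) : Q r ≤ r^3/3 := by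
  have h1 : Q r ≤ ∫ t in (0:ℝ)..r, t^2 := by
    apply intervalIntegral.integral_mono_on hr
    · exact (((continuous_pow 2).mul gw_cont).intervalIntegrable 0 r)
    · exact ((continuous_pow 2).intervalIntegrable 0 r)
    · intro t ht
      have := g_le_one (w t)
      have := g_nonneg (w t)
      nlinarith [sq_nonneg t]
  rw [integral_pow 2] at h1
  norm_num at h1
  linarith

lemma w_hasDeriv : ∀ r ∈ Ioo (0:ℝ) T0, HasDerivAt w (-(Q r) / r^2) r := by
  intro r hr
  have hrpos : 0 < r := hr.1
  have hF1 : HasDerivAt (fun x => ∫ t in (0:ℝ)..x, t * g (w t)) (r * g (w r)) r :=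
    (Continuous.integral_hasStrictDerivAt (continuous_id.mul gw_cont) 0 r).hasDerivAt
  have hinv : HasDerivAt (fun x : ℝ => x⁻¹) (-(r^2)⁻¹) r :=
    hasDerivAt_inv (ne_of_gt hrpos)
  have h2 : HasDerivAt (fun x => x⁻¹ * Q x) (-(r^2)⁻¹ * Q r + r⁻¹ * (r^2 * g (w r))) r :=
    hinv.mul (Q_deriv r)
  have hR : HasDerivAt (fun x => 1 - (∫ t in (0:ℝ)..x, t * g (w t)) + x⁻¹ * Q x)
      (0 - r * g (w r) + (-(r^2)⁻¹ * Q r + r⁻¹ * (r^2 * g (w r)))) r := by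
    exact ((hasDerivAt_const r (1:ℝ)).sub hF1).add h2
  have heq : w =ᶠ[nhds r] (fun x => 1 - (∫ t in (0:ℝ)..x, t * g (w t)) + x⁻¹ * Q x) := by
    apply Filter.eventuallyEq_of_mem (Ioo_mem_nhds hr.1 hr.2)
    intro x hx
    exact w_eqn x ⟨hx.1.le, hx.2.le⟩
  have := hR.congr_of_eventuallyEq heq
  refine this.congr_deriv ?_
  rw [div_eq_mul_inv, show r⁻¹ * (r^2 * g (w r)) = r * g (w r) by
    rw [pow_two, ← mul_assoc, ← mul_assoc, inv_mul_cancel₀ hrpos.ne', one_mul]]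
  ring

lemma w_anti_Icc : AntitoneOn w (Icc 0 T0) := by
  apply antitoneOn_of_deriv_nonpos (convex_Icc 0 T0) (w_cont.continuousOn)
  · rw [interior_Icc]
    intro x hx
    exact (w_hasDeriv x hx).differentiableAt.differentiableWithinAt
  · rw [interior_Icc]
    intro x hx
    rw [(w_hasDeriv x hx).deriv]
    have h1 := Q_nonneg hx.1.le
    have h2 : (0:ℝ) < x^2 := pow_pos hx.1 2
    apply div_nonpos_of_nonpos_of_nonneg <;> linarith

lemma w_anti : ∀ a b : ℝ, 0 ≤ a → a ≤ b → w b ≤ w a := by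
  intro a b ha hab
  rcases le_or_gt b T0 with hb | hb
  · exact w_anti_Icc ⟨ha, le_trans hab hb⟩ ⟨le_trans ha hab, hb⟩ hab
  · rw [w_clamp hb.le]
    rcases le_or_gt a T0 with haT | haT
    · exact w_anti_Icc ⟨ha, haT⟩ ⟨T0_pos.le, le_refl T0⟩ haT
    · rw [w_clamp haT.le]

lemma w_ftc : ∀ a b : ℝ, 0 < a → a ≤ b → b < T0 →
    w b - w a = ∫ t in a..b, -(Q t)/t^2 := by
  intro a b ha hab hb
  symm
  apply intervalIntegral.integral_eq_sub_of_hasDerivAt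
  · intro x hx
    rw [uIcc_of_le hab] at hx
    exact w_hasDeriv x ⟨lt_of_lt_of_le ha hx.1, lt_of_le_of_lt hx.2 hb⟩
  · apply ContinuousOn.intervalIntegrable
    apply ContinuousOn.div (Q_cont.continuousOn.neg) (continuousOn_pow 2)
    intro x hx
    rw [uIcc_of_le hab] at hx
    exact pow_ne_zero 2 (ne_of_gt (lt_of_lt_of_le ha hx.1))

lemma inv_sq_ftc : ∀ a b : ℝ, 0 < a → a ≤ b →
    ∫ t in a..b, (t^2)⁻¹ = a⁻¹ - b⁻¹ := by
  intro a b ha hab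
  have h := intervalIntegral.integral_eq_sub_of_hasDerivAt
    (f := fun t : ℝ => -t⁻¹) (f' := fun t : ℝ => (t^2)⁻¹) (a := a) (b := b) ?_ ?_
  · rw [h]; ring
  · intro x hx
    rw [uIcc_of_le hab] at hx
    have hx0 : x ≠ 0 := ne_of_gt (lt_of_lt_of_le ha hx.1)
    have := (hasDerivAt_inv hx0).neg
    exact this.congr_deriv (by ring)
  · apply ContinuousOn.intervalIntegrable
    apply ContinuousOn.inv₀ (continuousOn_pow 2)
    intro x hx
    rw [uIcc_of_le hab] at hx
    exact pow_ne_zero 2 (ne_of_gt (lt_of_lt_of_le ha hx.1))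

lemma S_nonempty : ∃ r ∈ Icc (0:ℝ) (T0-1), w r ≤ 0 := by
  by_contra hcon
  push_neg at hcon
  have hpos : ∀ r ∈ Icc (0:ℝ) (T0-1), 0 < w r := hcon
  set T' : ℝ := T0 - 1 with hT'def
  have hT' : 2000 ≤ T' := by have := T0_big; simp only [hT'def]; linarith
  have hT'T0 : T' < T0 := by simp only [hT'def]; linarith [T0_pos]
  have hsubT : ∀ t : ℝ, t ∈ Icc 0 T' → t ∈ Icc (0:ℝ) T0 :=
    fun t ht => ⟨ht.1, le_trans ht.2 hT'T0.le⟩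
  have gsq : ∀ t ∈ Icc (0:ℝ) T', (w t)^2 ≤ g (w t) := by
    intro t ht
    exact sq_le_g (hpos t ht).le (w_le_one t (hsubT t ht))
  -- step 1 : w ≥ 1/2 on [0,1]
  have step1 : ∀ t ∈ Icc (0:ℝ) 1, (1/2 : ℝ) ≤ w t := by
    intro t ht
    have := w_lower t ⟨ht.1, le_trans ht.2 (by linarith)⟩
    nlinarith [ht.1, ht.2]
  -- step 2 : Q 1 ≥ 1/12
  have step2 : (1/12 : ℝ) ≤ Q 1 := by
    have h1 : ∫ t in (0:ℝ)..1, (1/4 : ℝ) * t^2 ≤ Q 1 := by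
      apply intervalIntegral.integral_mono_on zero_le_one
      · exact (Continuous.intervalIntegrable (by fun_prop) 0 1)
      · exact (((continuous_pow 2).mul gw_cont).intervalIntegrable 0 1)
      · intro t ht
        have h2 := step1 t ht
        have h3 : t ∈ Icc (0:ℝ) T' := ⟨ht.1, le_trans ht.2 (by linarith)⟩
        have h4 := gsq t h3
        have h5 : (1/4 : ℝ) ≤ (w t)^2 := by nlinarith
        nlinarith [sq_nonneg t]
    rw [intervalIntegral.integral_const_mul, integral_pow 2] at h1
    norm_num at h1
    linarith
  -- step 3 : w r ≥ 1/(24r) on [1, T'/2]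
  have step3 : ∀ r ∈ Icc (1:ℝ) (T'/2), 1/(24*r) ≤ w r := by
    intro r hr
    have hr0 : (0:ℝ) < r := lt_of_lt_of_le one_pos hr.1
    have hrT' : r ≤ T' := le_trans hr.2 (by linarith)
    have hftc := w_ftc r T' hr0 hrT' hT'T0
    have hint : ∫ t in r..T', (1/12 : ℝ) * (t^2)⁻¹ ≤ ∫ t in r..T', Q t/t^2 := by
      apply intervalIntegral.integral_mono_on hrT'
      · apply ContinuousOn.intervalIntegrable
        apply ContinuousOn.mul continuousOn_const
        apply ContinuousOn.inv₀ (continuousOn_pow 2)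
        intro x hx
        rw [uIcc_of_le hrT'] at hx
        exact pow_ne_zero 2 (ne_of_gt (lt_of_lt_of_le hr0 hx.1))
      · apply ContinuousOn.intervalIntegrable
        apply ContinuousOn.div Q_cont.continuousOn (continuousOn_pow 2)
        intro x hx
        rw [uIcc_of_le hrT'] at hx
        exact pow_ne_zero 2 (ne_of_gt (lt_of_lt_of_le hr0 hx.1))
      · intro t ht
        have ht0 : 0 < t := lt_of_lt_of_le hr0 ht.1
        have hQt : (1/12 : ℝ) ≤ Q t := le_trans step2 (Q_mono zero_le_one (le_trans hr.1 ht.1))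
        rw [div_eq_mul_inv]
        apply mul_le_mul_of_nonneg_right hQt (by positivity)
    have hneg : ∫ t in r..T', -(Q t)/t^2 = -∫ t in r..T', Q t/t^2 := by
      rw [← intervalIntegral.integral_neg]
      apply intervalIntegral.integral_congr
      intro t _
      ring
    rw [hneg] at hftc
    have hinv := inv_sq_ftc r T' hr0 hrT'
    rw [intervalIntegral.integral_const_mul, hinv] at hint
    have hT'pos : 0 < T' := by linarith
    have hhalf : (2*r)⁻¹ ≤ r⁻¹ - T'⁻¹ := by
      have h1 : T'⁻¹ ≤ (2*r)⁻¹ := by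
        apply inv_anti₀ (by positivity)
        linarith [hr.2]
      have h2 : r⁻¹ = (2*r)⁻¹ * 2 := by
        field_simp
      rw [h2]
      linarith
    have hwT' : 0 < w T' := hpos T' ⟨by linarith, le_refl T'⟩
    have : 1/12 * (2*r)⁻¹ ≤ w r - w T' := by
      calc (1/12 : ℝ) * (2*r)⁻¹ ≤ 1/12 * (r⁻¹ - T'⁻¹) := by nlinarith
      _ ≤ ∫ t in r..T', Q t/t^2 := hint
      _ = w r - w T' := by linarith [hftc]
    calc 1/(24*r) = 1/12 * (2*r)⁻¹ := by
          field_simp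
          ring
    _ ≤ w r - w T' := this
    _ ≤ w r := by linarith
  -- step 4 : Q s ≥ (s-1)/576 on [2, T'/2]
  have step4 : ∀ s ∈ Icc (2:ℝ) (T'/2), (s-1)/576 ≤ Q s := by
    intro s hs
    have h1s : (1:ℝ) ≤ s := by linarith [hs.1]
    have hadd := Q_add 1 s
    have hint : ∫ t in (1:ℝ)..s, (1/576 : ℝ) ≤ ∫ t in (1:ℝ)..s, t^2 * g (w t) := by
      apply intervalIntegral.integral_mono_on h1s
      · exact intervalIntegrable_const
      · exact (((continuous_pow 2).mul gw_cont).intervalIntegrable 1 s)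
      · intro t ht
        have ht1 : (1:ℝ) ≤ t := ht.1
        have ht0 : (0:ℝ) < t := by linarith
        have htmem : t ∈ Icc (1:ℝ) (T'/2) := ⟨ht.1, le_trans ht.2 hs.2⟩
        have hw := step3 t htmem
        have hwpos : 0 < w t := lt_of_lt_of_le (by positivity) hw
        have hsq : (1/(24*t))^2 ≤ (w t)^2 := by
          apply pow_le_pow_left₀ (by positivity) hw
        have hgt : (w t)^2 ≤ g (w t) := gsq t ⟨by linarith, by linarith [htmem.2]⟩
        have hkey : (1/576 : ℝ) = t^2 * (1/(24*t))^2 := by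
          field_simp
          ring
        rw [hkey]
        have := mul_le_mul_of_nonneg_left hsq (sq_nonneg t)
        nlinarith [sq_nonneg t]
    rw [intervalIntegral.integral_const] at hint
    simp only [smul_eq_mul] at hint
    have hQ1 := step2
    have : (s-1) * (1/576) = (s-1)/576 := by ring
    rw [this] at hint
    linarith
  -- steps 5-6 : contradiction via logarithmic divergence
  have h2T : (2:ℝ) ≤ T'/2 := by linarith
  have hT2T0 : T'/2 < T0 := by linarith [T0_pos]
  have hftc := w_ftc 2 (T'/2) two_pos h2T hT2T0
  have hneg : ∫ t in (2:ℝ)..(T'/2), -(Q t)/t^2 = -∫ t in (2:ℝ)..(T'/2), Q t/t^2 := by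
    rw [← intervalIntegral.integral_neg]
    apply intervalIntegral.integral_congr
    intro t _
    ring
  rw [hneg] at hftc
  have hint : ∫ t in (2:ℝ)..(T'/2), (1/1152 : ℝ) * (1/t) ≤ ∫ t in (2:ℝ)..(T'/2), Q t/t^2 := by
    apply intervalIntegral.integral_mono_on h2T
    · apply ContinuousOn.intervalIntegrable
      apply ContinuousOn.mul continuousOn_const
      apply ContinuousOn.div continuousOn_const continuousOn_id
      intro x hx
      rw [uIcc_of_le h2T] at hx
      exact ne_of_gt (lt_of_lt_of_le two_pos hx.1)
    · apply ContinuousOn.intervalIntegrable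
      apply ContinuousOn.div Q_cont.continuousOn (continuousOn_pow 2)
      intro x hx
      rw [uIcc_of_le h2T] at hx
      exact pow_ne_zero 2 (ne_of_gt (lt_of_lt_of_le two_pos hx.1))
    · intro t ht
      have ht2 : (2:ℝ) ≤ t := ht.1
      have ht0 : (0:ℝ) < t := by linarith
      have hQt := step4 t ⟨ht.1, ht.2⟩
      have h1 : (1/1152 : ℝ) * (1/t) ≤ (t-1)/576/t^2 := by
        have he : (1/1152 : ℝ) * (1/t) = 1/(1152*t) := by ring
        rw [he, div_div, div_le_div_iff₀ (by positivity) (by positivity)]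
        nlinarith
      have h2 : (t-1)/576/t^2 ≤ Q t/t^2 := by gcongr
      linarith
  have hconst : ∫ t in (2:ℝ)..(T'/2), (1/1152:ℝ)*(1/t) = (1/1152) * Real.log ((T'/2)/2) := by
    rw [intervalIntegral.integral_const_mul, integral_one_div]
    rw [uIcc_of_le h2T]
    simp only [mem_Icc, not_and, not_le]
    intro h
    linarith
  have hlog : (1200:ℝ) ≤ Real.log ((T'/2)/2) := by
    have hq : (T'/2)/2 = T'/4 := by ring
    rw [hq]
    have he8 := Real.add_one_le_exp (800:ℝ)
    have h12 : (1:ℝ) ≤ Real.exp 1200 := Real.one_le_exp (by norm_num)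
    have hee : Real.exp 2000 = Real.exp 800 * Real.exp 1200 := by
      rw [← Real.exp_add]; norm_num
    have hT0e : T0 = Real.exp 2000 := rfl
    have h4 : Real.exp 1200 ≤ T'/4 := by
      simp only [hT'def, hT0e]
      nlinarith [Real.exp_pos (1200:ℝ)]
    calc (1200:ℝ) = Real.log (Real.exp 1200) := (Real.log_exp _).symm
    _ ≤ Real.log (T'/4) := Real.log_le_log (Real.exp_pos _) h4
  have hw2 : w 2 ≤ 1 := w_le_one 2 ⟨by norm_num, by linarith⟩
  have hwT2 : 0 < w (T'/2) := hpos (T'/2) ⟨by linarith, by linarith⟩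
  rw [hconst] at hint
  linarith

/- ### The first zero -/

def Sz : Set ℝ := {r | r ∈ Icc (0:ℝ) (T0-1) ∧ w r ≤ 0}

lemma Sz_ne : Sz.Nonempty := by
  obtain ⟨r, hr, hw⟩ := S_nonempty
  exact ⟨r, hr, hw⟩

lemma Sz_bdd : BddBelow Sz := ⟨0, fun r hr => hr.1.1⟩

lemma Sz_closed : IsClosed Sz := by
  have : Sz = Icc (0:ℝ) (T0-1) ∩ w ⁻¹' (Iic 0) := by
    ext r
    simp [Sz, mem_Icc, mem_Iic]
  rw [this]
  exact isClosed_Icc.inter (isClosed_Iic.preimage w_cont)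

def Rz : ℝ := sInf Sz

lemma Rz_mem : Rz ∈ Sz := Sz_closed.csInf_mem Sz_ne Sz_bdd

lemma Rz_le_T' : Rz ≤ T0 - 1 := Rz_mem.1.2

lemma Rz_lt_T0 : Rz < T0 := lt_of_le_of_lt Rz_le_T' (by linarith [T0_pos])

lemma Rz_ge_one : 1 ≤ Rz := by
  apply le_csInf Sz_ne
  intro r hr
  have h1 := w_lower r ⟨hr.1.1, by linarith [hr.1.2, T0_pos]⟩
  have h2 := hr.2
  nlinarith [hr.1.1]

lemma Rz_pos : 0 < Rz := lt_of_lt_of_le one_pos Rz_ge_one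

lemma w_pos_lt {r : ℝ} (h0 : 0 ≤ r) (hr : r < Rz) : 0 < w r := by
  by_contra hc
  push_neg at hc
  have : r ∈ Sz := ⟨⟨h0, by linarith [Rz_le_T']⟩, hc⟩
  exact absurd (csInf_le Sz_bdd this) (not_le.mpr hr)

lemma w_Rz : w Rz = 0 := by
  have hle : w Rz ≤ 0 := Rz_mem.2
  rcases eq_or_lt_of_le hle with h | h
  · exact h
  · exfalso
    set e : ℝ := -(w Rz) with he
    have hepos : 0 < e := by simp only [he]; linarith
    obtain ⟨d, hd, hball⟩ := Metric.continuousAt_iff.mp w_cont.continuousAt e hepos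
    set x : ℝ := Rz - min (d/2) (Rz/2) with hx
    have hm0 : 0 < min (d/2) (Rz/2) := lt_min (by linarith) (by linarith [Rz_pos])
    have hx0 : 0 ≤ x := by
      have : min (d/2) (Rz/2) ≤ Rz/2 := min_le_right _ _
      simp only [hx]; linarith [Rz_pos]
    have hxlt : x < Rz := by simp only [hx]; linarith
    have hdist : dist x Rz < d := by
      rw [Real.dist_eq]
      have h1 : min (d/2) (Rz/2) ≤ d/2 := min_le_left _ _
      have h2 : |x - Rz| = min (d/2) (Rz/2) := by
        simp only [hx]
        rw [abs_of_nonpos (by linarith)]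
        ring
      rw [h2]; linarith
    have := hball hdist
    rw [Real.dist_eq] at this
    have hwx : 0 < w x := w_pos_lt hx0 hxlt
    cases abs_cases (w x - w Rz) <;> simp only [he] at * <;> nlinarith

lemma w_nonpos_ge {r : ℝ} (hr : Rz ≤ r) : w r ≤ 0 := by
  have := w_anti Rz r Rz_pos.le hr
  rw [w_Rz] at this
  exact this

lemma w_le_one' {r : ℝ} (hr : 0 ≤ r) : w r ≤ 1 := by
  have := w_anti 0 r le_rfl hr
  rw [w_zero] at this
  exact this

/- ### Regularity of `w` up to the center -/

def D1 : ℝ → ℝ := fun r => -(Q r) / r^2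

def D2 : ℝ → ℝ := fun r => if r = 0 then -(1/3) else 2*(Q r)/r^3 - g (w r)

lemma Q_zero : Q 0 = 0 := intervalIntegral.integral_same

lemma D1_zero : D1 0 = 0 := by simp [D1, Q_zero]

lemma hset_Ico : (Ico (0:ℝ) Rz) \ {0} = Ioo 0 Rz := by
  ext x
  simp only [mem_diff, mem_Ico, mem_Ioo, mem_singleton_iff]
  constructor
  · rintro ⟨⟨h1, h2⟩, h3⟩
    exact ⟨lt_of_le_of_ne h1 (Ne.symm h3), h2⟩
  · rintro ⟨h1, h2⟩
    exact ⟨⟨h1.le, h2⟩, ne_of_gt h1⟩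

lemma w_hasDerivWithin_zero : HasDerivWithinAt w 0 (Ico 0 Rz) 0 := by
  rw [hasDerivWithinAt_iff_tendsto_slope, hset_Ico]
  apply squeeze_zero_norm' (a := fun x => x/2)
  · apply eventually_nhdsWithin_of_forall
    intro x hx
    have hx0 : 0 < x := hx.1
    have hxT : x ∈ Icc (0:ℝ) T0 := ⟨hx.1.le, by linarith [hx.2, Rz_lt_T0]⟩
    have h1 := w_lower x hxT
    have h2 := w_le_one x hxT
    rw [slope_def_field, w_zero, sub_zero, Real.norm_eq_abs]
    rw [abs_div, abs_of_pos hx0]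
    rw [div_le_iff₀ hx0]
    cases abs_cases (w x - 1) <;> nlinarith
  · have hc : Continuous (fun x : ℝ => x/2) := by fun_prop
    have := hc.tendsto 0
    norm_num at this
    exact this.mono_left nhdsWithin_le_nhds

lemma w_hasDerivWithin : ∀ r ∈ Ico (0:ℝ) Rz, HasDerivWithinAt w (D1 r) (Ico 0 Rz) r := by
  intro r hr
  rcases eq_or_lt_of_le hr.1 with h0 | h0
  · rw [← h0, D1_zero]
    rw [← h0] at *
    exact w_hasDerivWithin_zero
  · exact ((w_hasDeriv r ⟨h0, lt_trans hr.2 Rz_lt_T0⟩).hasDerivWithinAt)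

lemma Q_cube_tendsto : Tendsto (fun r => Q r / r^3) (nhdsWithin 0 (Ioi 0)) (nhds (1/3)) := by
  rw [Metric.tendsto_nhdsWithin_nhds]
  intro e he
  obtain ⟨d, hd, hball⟩ := Metric.continuousAt_iff.mp (gw_cont.continuousAt (x := 0)) (e/2)
    (by linarith)
  refine ⟨d, hd, ?_⟩
  intro x hx hxd
  have hx0 : 0 < x := hx
  rw [Real.dist_eq, sub_zero] at hxd
  have hxlt : x < d := lt_of_abs_lt hxd
  -- |Q x - x^3/3| ≤ (e/2) x^3 /3·? bound directly
  have hdiff : Q x - x^3/3 = ∫ t in (0:ℝ)..x, t^2 * (g (w t) - 1) := by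
    have h1 : ∫ t in (0:ℝ)..x, t^2 * (g (w t) - 1)
        = (∫ t in (0:ℝ)..x, t^2 * g (w t)) - ∫ t in (0:ℝ)..x, t^2 := by
      rw [← intervalIntegral.integral_sub (f := fun t => t^2 * g (w t)) (((continuous_pow 2).mul gw_cont).intervalIntegrable 0 x)
        ((continuous_pow 2).intervalIntegrable 0 x)]
      apply intervalIntegral.integral_congr
      intro t _
      ring
    rw [h1, integral_pow 2]
    unfold Q
    norm_num
  have hbound : |Q x - x^3/3| ≤ (e/2) * x^2 * x := by
    rw [hdiff, ← Real.norm_eq_abs]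
    have := intervalIntegral.norm_integral_le_of_norm_le_const
      (C := (e/2) * x^2) (f := fun t => t^2 * (g (w t) - 1)) (a := 0) (b := x) ?_
    · calc ‖∫ t in (0:ℝ)..x, t^2 * (g (w t) - 1)‖ ≤ (e/2)*x^2 * |x - 0| := this
      _ = (e/2) * x^2 * x := by rw [sub_zero, abs_of_pos hx0]
    · intro t ht
      rw [uIoc_of_le hx0.le] at ht
      have ht2 : t^2 ≤ x^2 := by nlinarith [ht.1, ht.2]
      have hgw : |g (w t) - g (w 0)| < e/2 := by
        have : dist t 0 < d := by
          rw [Real.dist_eq, sub_zero, abs_of_pos ht.1]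
          linarith [ht.2]
        have := hball this
        rwa [Real.dist_eq] at this
      rw [w_zero, g_one] at hgw
      rw [Real.norm_eq_abs, abs_mul, abs_of_nonneg (sq_nonneg t)]
      nlinarith [abs_nonneg (g (w t) - 1), sq_nonneg t]
  rw [Real.dist_eq]
  have hx3 : (0:ℝ) < x^3 := by positivity
  have h2 : |Q x/x^3 - 1/3| = |Q x - x^3/3|/x^3 := by
    have he : Q x/x^3 - 1/3 = (Q x - x^3/3)/x^3 := by
      field_simp
    rw [he, abs_div, abs_of_pos hx3]
  rw [h2]
  have h3 : (e/2) * x^2 * x = (e/2) * x^3 := by ring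
  rw [h3] at hbound
  have h4 : |Q x - x^3/3|/x^3 ≤ e/2 := by
    rw [div_le_iff₀ hx3]
    linarith
  linarith

lemma D1_hasDerivAt {r : ℝ} (hr : r ≠ 0) : HasDerivAt D1 (2*(Q r)/r^3 - g (w r)) r := by
  have h1 : HasDerivAt (fun x => -(Q x)) (-(r^2 * g (w r))) r := (Q_deriv r).neg
  have h2 : HasDerivAt (fun x : ℝ => x^2) (2*r) r := by
    have := hasDerivAt_pow 2 r
    norm_num at this
    exact this
  have h3 := h1.div h2 (pow_ne_zero 2 hr)
  have h4 : HasDerivAt D1 ((-(r ^ 2 * g (w r)) * r ^ 2 - -Q r * (2 * r)) / (r ^ 2) ^ 2) r := h3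
  convert h4 using 1
  field_simp
  ring

lemma D1_hasDerivWithin : ∀ r ∈ Ico (0:ℝ) Rz, HasDerivWithinAt D1 (D2 r) (Ico 0 Rz) r := by
  intro r hr
  rcases eq_or_lt_of_le hr.1 with h0 | h0
  · rw [← h0] at *
    have hD20 : D2 0 = -(1/3) := by simp [D2]
    rw [hD20]
    rw [hasDerivWithinAt_iff_tendsto_slope, hset_Ico]
    have h1 : Tendsto (fun x => -(Q x/x^3)) (nhdsWithin 0 (Ioo 0 Rz)) (nhds (-(1/3))) :=
      (Q_cube_tendsto.mono_left (nhdsWithin_mono _ Ioo_subset_Ioi_self)).neg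
    apply Filter.Tendsto.congr' _ h1
    apply eventually_nhdsWithin_of_forall
    intro x hx
    have hx0 : 0 < x := hx.1
    rw [slope_def_field, D1_zero, sub_zero, sub_zero]
    simp only [D1]
    rw [div_div, show x^2*x = x^3 from by ring, neg_div]
  · have hD2r : D2 r = 2*(Q r)/r^3 - g (w r) := if_neg (ne_of_gt h0)
    rw [hD2r]
    exact (D1_hasDerivAt (ne_of_gt h0)).hasDerivWithinAt

lemma D2_continuousOn : ContinuousOn D2 (Ico 0 Rz) := by
  intro r hr
  rcases eq_or_lt_of_le hr.1 with h0 | h0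
  · rw [← h0] at *
    rw [ContinuousWithinAt]
    have hD20 : D2 0 = -(1/3) := by simp [D2]
    rw [hD20, ← Ioo_insert_left Rz_pos, nhdsWithin_insert]
    rw [Filter.tendsto_sup]
    constructor
    · have := tendsto_pure_nhds D2 0
      rwa [hD20] at this
    · have h1 : Tendsto (fun x => 2*(Q x/x^3) - g (w x)) (nhdsWithin 0 (Ioo 0 Rz))
          (nhds (2*(1/3) - 1)) := by
        apply Filter.Tendsto.sub
        · exact ((Q_cube_tendsto.mono_left (nhdsWithin_mono _ Ioo_subset_Ioi_self)).const_mul 2)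
        · have := gw_cont.tendsto 0
          rw [w_zero, g_one] at this
          exact this.mono_left nhdsWithin_le_nhds
      have h2 : (2*(1/3) - 1 : ℝ) = -(1/3) := by norm_num
      rw [h2] at h1
      apply Filter.Tendsto.congr' _ h1
      apply eventually_nhdsWithin_of_forall
      intro x hx
      simp only [D2, if_neg (ne_of_gt hx.1)]
      ring
  · apply ContinuousAt.continuousWithinAt
    have hcont : ContinuousAt (fun x => 2*(Q x)/x^3 - g (w x)) r := by
      apply ContinuousAt.sub
      · exact ContinuousAt.div ((continuous_const.mul Q_cont).continuousAt (x := r))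
          ((continuous_pow 3).continuousAt) (pow_ne_zero 3 (ne_of_gt h0))
      · exact gw_cont.continuousAt
    apply hcont.congr
    apply Filter.eventuallyEq_of_mem (isOpen_compl_singleton.mem_nhds (ne_of_gt h0 : r ≠ 0))
    intro x hx
    simp only [mem_compl_iff, mem_singleton_iff] at hx
    simp only [D2]
    rw [if_neg hx]

lemma uniqueDiff_Ico : UniqueDiffOn ℝ (Ico (0:ℝ) Rz) := uniqueDiffOn_Ico 0 Rz

lemma derivWithin_w_eq : ∀ r ∈ Ico (0:ℝ) Rz, derivWithin w (Ico 0 Rz) r = D1 r :=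
  fun r hr => (w_hasDerivWithin r hr).derivWithin (uniqueDiff_Ico r hr)

lemma derivWithin_D1_eq : ∀ r ∈ Ico (0:ℝ) Rz, derivWithin D1 (Ico 0 Rz) r = D2 r :=
  fun r hr => (D1_hasDerivWithin r hr).derivWithin (uniqueDiff_Ico r hr)

lemma D1_contDiffOn : ContDiffOn ℝ 1 D1 (Ico 0 Rz) := by
  have key : ContDiffOn ℝ (0+1) D1 (Ico (0:ℝ) Rz) := by
    rw [contDiffOn_succ_iff_derivWithin uniqueDiff_Ico]
    refine ⟨fun r hr => (D1_hasDerivWithin r hr).differentiableWithinAt, by simp, ?_⟩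
    rw [contDiffOn_zero]
    exact D2_continuousOn.congr derivWithin_D1_eq
  simpa using key

lemma w_contDiffOn : ContDiffOn ℝ 2 w (Ico 0 Rz) := by
  have key : ContDiffOn ℝ (1+1) w (Ico (0:ℝ) Rz) := by
    rw [contDiffOn_succ_iff_derivWithin uniqueDiff_Ico]
    refine ⟨fun r hr => (w_hasDerivWithin r hr).differentiableWithinAt, by simp, ?_⟩
    exact D1_contDiffOn.congr derivWithin_w_eq
  have h : ((1:WithTop ℕ∞) + 1) = 2 := by norm_num
  rwa [h] at key

lemma derivWithin_w_zero : derivWithin w (Ico 0 Rz) 0 = 0 := by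
  rw [derivWithin_w_eq 0 ⟨le_refl 0, Rz_pos⟩, D1_zero]

/- ### Scaled profiles -/

section Scaled

variable {γ : ℝ} (hγ : 0 < γ)

/-- scaled profile -/
def uu (γ : ℝ) : ℝ → ℝ := fun r => (max (w (γ*r)) 0) ^ ((3:ℝ)/2)

lemma uu_nonneg (γ : ℝ) (r : ℝ) : 0 ≤ uu γ r :=
  Real.rpow_nonneg (le_max_right _ _) _

include hγ

lemma uu_mem {r : ℝ} (hr : r ∈ Ico 0 (Rz/γ)) : γ * r ∈ Ico 0 Rz := by
  constructor
  · exact mul_nonneg hγ.le hr.1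
  · have h := (lt_div_iff₀ hγ).mp hr.2
    calc γ * r = r * γ := mul_comm _ _
    _ < Rz := h

lemma uu_w_pos {r : ℝ} (hr : r ∈ Ico 0 (Rz/γ)) : 0 < w (γ*r) :=
  w_pos_lt (uu_mem hγ hr).1 (uu_mem hγ hr).2

lemma uu_eq {r : ℝ} (hr : r ∈ Ico 0 (Rz/γ)) : uu γ r = w (γ*r) ^ ((3:ℝ)/2) := by
  unfold uu
  rw [max_eq_left (uu_w_pos hγ hr).le]

lemma uu_pos {r : ℝ} (hr : r ∈ Ico 0 (Rz/γ)) : 0 < uu γ r := by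
  rw [uu_eq hγ hr]
  exact Real.rpow_pos_of_pos (uu_w_pos hγ hr) _

lemma uu23 {r : ℝ} (hr : r ∈ Ico 0 (Rz/γ)) : uu γ r ^ ((2:ℝ)/3) = w (γ*r) := by
  rw [uu_eq hγ hr, ← Real.rpow_mul (uu_w_pos hγ hr).le]
  norm_num

lemma uu_zero {r : ℝ} (hr : Rz/γ ≤ r) : uu γ r = 0 := by
  have h1 : Rz ≤ γ * r := by
    rw [div_le_iff₀ hγ] at hr
    linarith [hr]
  have h2 : w (γ*r) ≤ 0 := w_nonpos_ge h1
  unfold uu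
  rw [max_eq_right h2, Real.zero_rpow (by norm_num)]

lemma uu_cont : Continuous (uu γ) := by
  apply Continuous.rpow_const
  · exact (w_cont.comp (continuous_const.mul continuous_id)).max continuous_const
  · intro x
    right; norm_num

lemma uu_anti : AntitoneOn (uu γ) (Ici 0) := by
  intro x hx y hy hxy
  unfold uu
  apply Real.rpow_le_rpow (le_max_right _ _) _ (by norm_num)
  apply max_le_max _ (le_refl (0:ℝ))
  exact w_anti (γ*x) (γ*y) (mul_nonneg hγ.le hx) (mul_le_mul_of_nonneg_left hxy hγ.le)

lemma uu_R_pos : 0 < Rz/γ := div_pos Rz_pos hγ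

lemma uu_comp_contDiff : ContDiffOn ℝ 2 (fun r => w (γ*r)) (Ico 0 (Rz/γ)) := by
  apply ContDiffOn.comp (w_contDiffOn)
  · exact (contDiff_const.mul contDiff_id).contDiffOn
  · intro r hr
    exact uu_mem hγ hr

lemma uu_contDiff : ContDiffOn ℝ 2 (uu γ) (Ico 0 (Rz/γ)) := by
  apply ContDiffOn.congr _ (fun r hr => uu_eq hγ hr)
  intro r hr
  exact ((uu_comp_contDiff hγ r hr).rpow_const_of_ne (ne_of_gt (uu_w_pos hγ hr)))

lemma uu23_contDiff : ContDiffOn ℝ 2 (fun r => uu γ r ^ ((2:ℝ)/3)) (Ico 0 (Rz/γ)) :=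
  (uu_comp_contDiff hγ).congr (fun r hr => uu23 hγ hr)

lemma uu_comp_hasDerivWithin_zero :
    HasDerivWithinAt (fun r => w (γ*r)) 0 (Ico 0 (Rz/γ)) 0 := by
  have hinner : HasDerivWithinAt (fun r : ℝ => γ*r) γ (Ico 0 (Rz/γ)) 0 := by
    have := ((hasDerivAt_id (0:ℝ)).const_mul γ)
    simpa using this.hasDerivWithinAt
  have houter : HasDerivWithinAt w 0 (Ico 0 Rz) (γ*0) := by
    rw [mul_zero]
    exact w_hasDerivWithin_zero
  have := HasDerivWithinAt.comp 0 houter hinner (fun r hr => uu_mem hγ hr)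
  simpa [Function.comp_def] using this

lemma uu23_derivWithin_zero :
    derivWithin (fun r => uu γ r ^ ((2:ℝ)/3)) (Ico 0 (Rz/γ)) 0 = 0 := by
  have h1 : derivWithin (fun r => uu γ r ^ ((2:ℝ)/3)) (Ico 0 (Rz/γ)) 0
      = derivWithin (fun r => w (γ*r)) (Ico 0 (Rz/γ)) 0 := by
    apply derivWithin_congr (fun r hr => uu23 hγ hr)
    exact uu23 hγ ⟨le_refl 0, uu_R_pos hγ⟩
  rw [h1]
  exact (uu_comp_hasDerivWithin_zero hγ).derivWithin
    (uniqueDiffOn_Ico 0 (Rz/γ) 0 ⟨le_refl 0, uu_R_pos hγ⟩)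

lemma uu_deriv1 {r : ℝ} (hr : r ∈ Ioo 0 (Rz/γ)) :
    deriv (fun s => uu γ s ^ ((2:ℝ)/3)) r = D1 (γ*r) * γ := by
  have hopen : IsOpen (Ioo (0:ℝ) (Rz/γ)) := isOpen_Ioo
  have hev : (fun s => uu γ s ^ ((2:ℝ)/3)) =ᶠ[nhds r] (fun s => w (γ*s)) :=
    Filter.eventuallyEq_of_mem (hopen.mem_nhds hr)
      (fun s hs => uu23 hγ ⟨hs.1.le, hs.2⟩)
  rw [hev.deriv_eq]
  have hmem : γ * r ∈ Ioo 0 T0 :=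
    ⟨mul_pos hγ hr.1, lt_trans (uu_mem hγ ⟨hr.1.le, hr.2⟩).2 Rz_lt_T0⟩
  have houter : HasDerivAt w (D1 (γ*r)) (γ*r) := w_hasDeriv (γ*r) hmem
  have hinner : HasDerivAt (fun s : ℝ => γ*s) γ r := by
    simpa using (hasDerivAt_id r).const_mul γ
  exact (HasDerivAt.comp r houter hinner).deriv

lemma uu_deriv2 {r : ℝ} (hr : r ∈ Ioo 0 (Rz/γ)) :
    deriv (deriv (fun s => uu γ s ^ ((2:ℝ)/3))) r = (D2 (γ*r) * γ) * γ := by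
  have hopen : IsOpen (Ioo (0:ℝ) (Rz/γ)) := isOpen_Ioo
  have hev : (deriv (fun s => uu γ s ^ ((2:ℝ)/3))) =ᶠ[nhds r]
      (fun s => D1 (γ*s) * γ) :=
    Filter.eventuallyEq_of_mem (hopen.mem_nhds hr)
      (fun s hs => uu_deriv1 hγ hs)
  rw [hev.deriv_eq]
  have hx0 : γ * r ≠ 0 := ne_of_gt (mul_pos hγ hr.1)
  have houter : HasDerivAt D1 (D2 (γ*r)) (γ*r) := by
    have := D1_hasDerivAt hx0
    have hD2 : D2 (γ*r) = 2*(Q (γ*r))/(γ*r)^3 - g (w (γ*r)) := if_neg hx0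
    rw [hD2]
    exact this
  have hinner : HasDerivAt (fun s : ℝ => γ*s) γ r := by
    simpa using (hasDerivAt_id r).const_mul γ
  exact ((HasDerivAt.comp r houter hinner).mul_const γ).deriv

/-- the scaled Lane–Emden equation -/
lemma uu_ode {r : ℝ} (hr : r ∈ Ioo 0 (Rz/γ)) :
    deriv (deriv (fun s => uu γ s ^ ((2:ℝ)/3))) r
      + 2/r * deriv (fun s => uu γ s ^ ((2:ℝ)/3)) r = -(γ^2) * uu γ r := by
  rw [uu_deriv1 hγ hr, uu_deriv2 hγ hr]
  have hx := mul_pos hγ hr.1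
  have hx0 : γ * r ≠ 0 := ne_of_gt hx
  have hr0 : r ≠ 0 := ne_of_gt hr.1
  have hgval : g (w (γ*r)) = uu γ r := by
    have hwp := uu_w_pos hγ ⟨hr.1.le, hr.2⟩
    have hwle : w (γ*r) ≤ 1 := w_le_one' (mul_pos hγ hr.1).le
    rw [g_eq hwp.le hwle, ← uu_eq hγ ⟨hr.1.le, hr.2⟩]
  simp only [D1, D2, if_neg hx0]
  rw [hgval]
  field_simp
  ring

end Scaled

/- ### Part (i) helpers -/

lemma Hbridge (A B E F s : ℝ) (hs : 0 ≤ s) :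
    F * (s^3) ^ ((5:ℝ)/3) + A * (s^3) - E * (s^3) ^ ((2:ℝ)/3) - B
      = F*s^5 + A*s^3 - E*s^2 - B := by
  rw [show ((5:ℝ)/3) = ((5:ℕ):ℝ)/3 by norm_num, show ((2:ℝ)/3) = ((2:ℕ):ℝ)/3 by norm_num,
    cube_rpow s hs 5, cube_rpow s hs 2]

lemma cuberoot (k : ℝ) (hk : 0 < k) : 0 < k ^ ((1:ℝ)/3) ∧ (k ^ ((1:ℝ)/3))^3 = k := by
  constructor
  · exact Real.rpow_pos_of_pos hk _
  · rw [← Real.rpow_natCast (k ^ ((1:ℝ)/3)) 3, ← Real.rpow_mul hk.le]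
    norm_num

lemma root_lt {A B E F t : ℝ} (hA : 0 < A) (hF : 0 < F) (hBFAE : B*F < A*E)
    (ht : 0 < t) (hroot : F*t^5 + A*t^3 - E*t^2 - B = 0) : t^3 * F < E := by
  by_contra hcon
  push_neg at hcon
  have f1 : 0 ≤ t^2 * (t^3*F - E) := mul_nonneg (sq_nonneg t) (by linarith)
  have f2 : A*E ≤ A*(t^3*F) := mul_le_mul_of_nonneg_left hcon hA.le
  have f3 : A*t^3 ≤ B := by nlinarith
  have f4 : A*t^3*F ≤ B*F := mul_le_mul_of_nonneg_right f3 hF.le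
  nlinarith

lemma uu23_hasDerivWithin_zero {γ : ℝ} (hγ : 0 < γ) :
    HasDerivWithinAt (fun r => uu γ r ^ ((2:ℝ)/3)) 0 (Ico 0 (Rz/γ)) 0 := by
  apply (uu_comp_hasDerivWithin_zero hγ).congr
  · intro x hx
    exact uu23 hγ hx
  · exact uu23 hγ ⟨le_refl 0, uu_R_pos hγ⟩

end LE54

open LE54

/-- Lemma 5.4 (special proportional solutions, case `d = 5`). -/
theorem stmt12 (A B E F : ℝ) (hA : 0 < A) (hB : 0 < B) (hE : 0 < E) (hF : 0 < F)
    (hAEBF : B * F < A * E) :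
    -- (i) `H(k) = F k^{5/3} + A k − E k^{2/3} − B` has exactly one positive root,
    -- and this root is `< E/F`.
    (∃! k : ℝ, 0 < k ∧
        F * k ^ ((5:ℝ)/3) + A * k - E * k ^ ((2:ℝ)/3) - B = 0) ∧
    (∀ k : ℝ, 0 < k → F * k ^ ((5:ℝ)/3) + A * k - E * k ^ ((2:ℝ)/3) - B = 0 →
      k < E / F) ∧
    -- (ii) the radial system `Δ(u^{2/3}) = −Av + Bu`, `Δ(v^{2/3}) = −Eu + Fv` has a
    -- nontrivial pair of nonincreasing nonnegative compactly supported solutions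
    -- (given by radial profiles), with `u` a constant positive multiple of `v`.
    (∃ (R c : ℝ) (u v : ℝ → ℝ), 0 < R ∧ 0 < c ∧
      (∀ r : ℝ, u r = c * v r) ∧
      (∀ r ∈ Ici (0:ℝ), 0 ≤ u r ∧ 0 ≤ v r) ∧
      AntitoneOn u (Ici 0) ∧ AntitoneOn v (Ici 0) ∧
      ContinuousOn u (Ici 0) ∧ ContinuousOn v (Ici 0) ∧
      (∀ r ∈ Ico (0:ℝ) R, 0 < u r ∧ 0 < v r) ∧
      (∀ r : ℝ, R ≤ r → u r = 0 ∧ v r = 0) ∧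
      ContDiffOn ℝ 2 u (Ico 0 R) ∧ ContDiffOn ℝ 2 v (Ico 0 R) ∧
      ContDiffOn ℝ 2 (fun r => u r ^ ((2:ℝ)/3)) (Ico 0 R) ∧
      ContDiffOn ℝ 2 (fun r => v r ^ ((2:ℝ)/3)) (Ico 0 R) ∧
      derivWithin (fun r => u r ^ ((2:ℝ)/3)) (Ico 0 R) 0 = 0 ∧
      derivWithin (fun r => v r ^ ((2:ℝ)/3)) (Ico 0 R) 0 = 0 ∧
      (∀ r ∈ Ioo (0:ℝ) R,
        deriv (deriv (fun s => u s ^ ((2:ℝ)/3))) r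
            + 2 / r * deriv (fun s => u s ^ ((2:ℝ)/3)) r
          = -A * v r + B * u r ∧
        deriv (deriv (fun s => v s ^ ((2:ℝ)/3))) r
            + 2 / r * deriv (fun s => v s ^ ((2:ℝ)/3)) r
          = -E * u r + F * v r)) := by
  obtain ⟨s1, hs1, hroot1⟩ := poly_exists hF hA hE hB
  refine ⟨?_, ?_, ?_⟩
  · -- (i) existence and uniqueness
    refine ⟨s1^3, ⟨by positivity, ?_⟩, ?_⟩
    · rw [Hbridge A B E F s1 hs1.le]
      exact hroot1
    · rintro k ⟨hk, hkr⟩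
      obtain ⟨ht, ht3⟩ := cuberoot k hk
      have hb := Hbridge A B E F (k^((1:ℝ)/3)) (Real.rpow_nonneg hk.le _)
      rw [ht3] at hb
      have hpoly : F*(k^((1:ℝ)/3))^5 + A*(k^((1:ℝ)/3))^3 - E*(k^((1:ℝ)/3))^2 - B = 0 := by
        rw [ht3]
        linarith [hb, hkr]
      have heq := poly_uniq hF hA hB ht hs1 hpoly hroot1
      rw [← ht3, heq]
  · -- (i) bound on the root
    intro k hk hkr
    obtain ⟨ht, ht3⟩ := cuberoot k hk
    have hb := Hbridge A B E F (k^((1:ℝ)/3)) (Real.rpow_nonneg hk.le _)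
    rw [ht3] at hb
    have hpoly : F*(k^((1:ℝ)/3))^5 + A*(k^((1:ℝ)/3))^3 - E*(k^((1:ℝ)/3))^2 - B = 0 := by
      rw [ht3]
      linarith [hb, hkr]
    have := root_lt hA hF hAEBF ht hpoly
    rw [ht3] at this
    rw [lt_div_iff₀ hF]
    linarith
  · -- (ii) the solution pair
    obtain ⟨s, hs, hroot⟩ := poly_exists hE hB hF hA
    have hs2 : (0:ℝ) < s^2 := pow_pos hs 2
    have hs3 : (0:ℝ) < s^3 := pow_pos hs 3
    have hEsF : F < E * s^3 := by
      by_contra hcon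
      push_neg at hcon
      have f1 : 0 ≤ s^2 * (F - E*s^3) := mul_nonneg (sq_nonneg s) (by linarith)
      have f2 : A ≤ B*s^3 := by nlinarith
      have f3 := mul_le_mul_of_nonneg_right f2 hE.le
      have f4 := mul_le_mul_of_nonneg_left hcon hB.le
      nlinarith
    have hAs : 0 < A - B*s^3 := by
      have f2 : A - B*s^3 = s^2*(E*s^3-F) := by linear_combination -hroot
      nlinarith [mul_pos hs2 (show (0:ℝ) < E*s^3 - F by linarith)]
    obtain ⟨σ, hσdef⟩ : ∃ σ : ℝ, σ = A/(s^3) - B := ⟨_, rfl⟩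
    have hσpos : 0 < σ := by
      rw [hσdef]
      have h1 : A/(s^3) - B = (A - B*s^3)/(s^3) := by
        field_simp
      rw [h1]
      exact div_pos hAs hs3
    obtain ⟨γ, hγdef⟩ : ∃ γ : ℝ, γ = Real.sqrt σ := ⟨_, rfl⟩
    have hγpos : 0 < γ := by rw [hγdef]; exact Real.sqrt_pos.2 hσpos
    have hγ2 : γ^2 = σ := by rw [hγdef]; exact Real.sq_sqrt hσpos.le
    obtain ⟨K, hKdef⟩ : ∃ K : ℝ, K = ((s^3)⁻¹ : ℝ) ^ ((2:ℝ)/3) := ⟨_, rfl⟩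
    have hK : K = (s^2)⁻¹ := by
      rw [hKdef, ← inv_pow,
        show ((2:ℝ)/3) = ((2:ℕ):ℝ)/3 by norm_num,
        cube_rpow s⁻¹ (inv_nonneg.2 hs.le) 2, inv_pow]
    have hkey : σ * K = E - F * (s^3)⁻¹ := by
      rw [hσdef, hK]
      field_simp
      linear_combination -hroot
    have hvfun : (fun r => ((s^3)⁻¹ * uu γ r) ^ ((2:ℝ)/3))
        = fun r => K * (uu γ r ^ ((2:ℝ)/3)) := by
      funext r
      rw [Real.mul_rpow (inv_nonneg.2 hs3.le) (uu_nonneg γ r), hKdef]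
    refine ⟨Rz/γ, s^3, uu γ, (fun r => (s^3)⁻¹ * uu γ r), uu_R_pos hγpos, hs3, ?_, ?_, ?_, ?_,
      ?_, ?_, ?_, ?_, ?_, ?_, ?_, ?_, ?_, ?_, ?_⟩
    · intro r
      show uu γ r = s^3 * ((s^3)⁻¹ * uu γ r)
      field_simp
    · intro r _
      exact ⟨uu_nonneg γ r, mul_nonneg (inv_nonneg.2 hs3.le) (uu_nonneg γ r)⟩
    · exact uu_anti hγpos
    · intro x hx y hy hxy
      show (s^3)⁻¹ * uu γ y ≤ (s^3)⁻¹ * uu γ x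
      exact mul_le_mul_of_nonneg_left (uu_anti hγpos hx hy hxy) (inv_nonneg.2 hs3.le)
    · exact (uu_cont hγpos).continuousOn
    · exact (continuous_const.mul (uu_cont hγpos)).continuousOn
    · intro r hr
      exact ⟨uu_pos hγpos hr, mul_pos (inv_pos.2 hs3) (uu_pos hγpos hr)⟩
    · intro r hr
      refine ⟨uu_zero hγpos hr, ?_⟩
      show (s^3)⁻¹ * uu γ r = 0
      rw [uu_zero hγpos hr, mul_zero]
    · exact uu_contDiff hγpos
    · exact contDiffOn_const.mul (uu_contDiff hγpos)
    · exact uu23_contDiff hγpos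
    · beta_reduce
      rw [hvfun]
      exact contDiffOn_const.mul (uu23_contDiff hγpos)
    · exact uu23_derivWithin_zero hγpos
    · beta_reduce
      have h1 : HasDerivWithinAt (fun r => ((s^3)⁻¹ * uu γ r) ^ ((2:ℝ)/3)) (K * 0)
          (Ico 0 (Rz/γ)) 0 := by
        rw [hvfun]
        exact (uu23_hasDerivWithin_zero hγpos).const_mul K
      have h2 := h1.derivWithin (uniqueDiffOn_Ico 0 (Rz/γ) 0 ⟨le_refl 0, uu_R_pos hγpos⟩)
      rw [h2, mul_zero]
    · intro r hr
      have hode := uu_ode hγpos hr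
      constructor
      · beta_reduce
        rw [hode]
        rw [hγ2, hσdef]
        field_simp
        ring
      · beta_reduce
        rw [hvfun]
        have hd1 : deriv (fun s' => K * (uu γ s' ^ ((2:ℝ)/3)))
            = fun x => K * deriv (fun s' => uu γ s' ^ ((2:ℝ)/3)) x :=
          funext (fun x => deriv_const_mul_field K)
        rw [hd1, deriv_const_mul_field K]
        have hgoal : K * (deriv (deriv (fun s' => uu γ s' ^ ((2:ℝ)/3))) r)
            + 2/r * (K * deriv (fun s' => uu γ s' ^ ((2:ℝ)/3)) r)
            = K * (deriv (deriv (fun s' => uu γ s' ^ ((2:ℝ)/3))) r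
              + 2/r * deriv (fun s' => uu γ s' ^ ((2:ℝ)/3)) r) := by ring
        rw [hgoal, hode, hγ2]
        linear_combination (-(uu γ r)) * hkey
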